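/- Quantitative law of large numbers estimate: let (H,d) be a Hadamard space, a₁,…,a_N ∈ H, w₁,…,w_N positive weights with Σₙ wₙ = 1, Ξ the unique minimizer of x ↦ Σₙ wₙ·d(x,aₙ)², and ξ = Σₙ wₙ·d(Ξ,aₙ)² its minimum value. On a probability space, let (Y_k)_{k∈ℕ} be independent H-valued random variables, each taking the value aₙ with probability wₙ for n = 1,…,N. Define S₁ := Y₁ and S_{k+1} := (1 − 1/(k+1))S_k ⊕ (1/(k+1))Y_{k+1} for k ∈ ℕ. Then for every k ∈ ℕ, E[d(Ξ,S_k)²] ≤ ξ/k. -/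

import Mathlib

open Filter Topology

/-- A Hadamard space structure on a metric space `H`: a geodesic combination map
`geo x y t = (1-t)x ⊕ ty` satisfying the geodesic axioms and the CAT(0) inequality.
(Completeness is imposed via the `CompleteSpace` instance in the theorems.) -/
structure Hadamard (H : Type*) [MetricSpace H] : Type _ where
  geo : H → H → ℝ → H
  geo_zero : ∀ x y : H, geo x y 0 = x
  geo_one : ∀ x y : H, geo x y 1 = y
  geo_dist : ∀ x y : H, ∀ s ∈ Set.Icc (0 : ℝ) 1, ∀ t ∈ Set.Icc (0 : ℝ) 1,
    dist (geo x y s) (geo x y t) = |s - t| * dist x y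
  cat0 : ∀ z x y : H, ∀ t ∈ Set.Icc (0 : ℝ) 1,
    dist z (geo x y t) ^ 2
      ≤ (1 - t) * dist z x ^ 2 + t * dist z y ^ 2 - t * (1 - t) * dist x y ^ 2

/-- A function `f : H → (-∞,∞]` is (geodesically) convex if along every geodesic
`t ↦ (1-t)x ⊕ ty` it satisfies the convexity inequality. -/
def GeoConvex {H : Type*} [MetricSpace H] (G : Hadamard H) (f : H → EReal) : Prop :=
  ∀ x y : H, ∀ t ∈ Set.Icc (0 : ℝ) 1,
    f (G.geo x y t) ≤ ((1 - t : ℝ) : EReal) * f x + ((t : ℝ) : EReal) * f y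

open MeasureTheory ProbabilityTheory
open scoped ENNReal NNReal

/-- A composition with an arbitrary function after a measurable function with
countable range is measurable. -/
lemma meas_comp_cr {Ω α γ : Type*} {mΩ : MeasurableSpace Ω} [MeasurableSpace α]
    [MeasurableSingletonClass α] [MeasurableSpace γ]
    {f : Ω → α} (hf : Measurable f) (hr : (Set.range f).Countable) (F : α → γ) :
    Measurable fun ω => F (f ω) := by
  intro s _hs
  have h : (fun ω => F (f ω)) ⁻¹' s
      = f ⁻¹' (⋃ x ∈ {x | x ∈ Set.range f ∧ F x ∈ s}, {x}) := by
    ext ω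
    simp only [Set.mem_preimage, Set.mem_iUnion, Set.mem_singleton_iff, Set.mem_setOf_eq]
    constructor
    · intro h
      exact ⟨f ω, ⟨⟨ω, rfl⟩, h⟩, rfl⟩
    · rintro ⟨x, ⟨_, hFx⟩, rfl⟩
      exact hFx
  rw [h]
  exact hf (MeasurableSet.biUnion (hr.mono fun x hx => hx.1)
    fun x _ => measurableSet_singleton x)

/-- Binary version of `meas_comp_cr`. -/
lemma meas_comp_cr₂ {Ω α β γ : Type*} {mΩ : MeasurableSpace Ω} [MeasurableSpace α]
    [MeasurableSpace β] [MeasurableSingletonClass α] [MeasurableSingletonClass β]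
    [MeasurableSpace γ]
    {f : Ω → α} {g : Ω → β} (hf : Measurable f) (hg : Measurable g)
    (hrf : (Set.range f).Countable) (hrg : (Set.range g).Countable) (F : α → β → γ) :
    Measurable fun ω => F (f ω) (g ω) := by
  have hp : Measurable fun ω => (f ω, g ω) := hf.prodMk hg
  have hr : (Set.range fun ω => (f ω, g ω)).Countable := by
    refine (hrf.prod hrg).mono ?_
    rintro _ ⟨ω, rfl⟩
    exact ⟨⟨ω, rfl⟩, ⟨ω, rfl⟩⟩
  exact meas_comp_cr hp hr fun p => F p.1 p.2

/-- The iterated geodesic combination used for the inductive means. -/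
noncomputable def hadamardBuild {H : Type*} (geo : H → H → ℝ → H) (v : ℕ → H) : ℕ → H
  | 0 => v 0
  | 1 => v 1
  | (k+2) => geo (hadamardBuild geo v (k+1)) (v (k+2)) (1/((k:ℝ)+2))

/-- Quantitative law of large numbers estimate in a Hadamard space (Sturm):
`E[d(Ξ, S_k)²] ≤ ξ / k`. -/
theorem lln_quantitative_estimate
    {H : Type*} [MetricSpace H] [CompleteSpace H]
    [MeasurableSpace H] [BorelSpace H]
    (G : Hadamard H)
    {Ω : Type*} {m0 : MeasurableSpace Ω} {μ : Measure Ω} [IsProbabilityMeasure μ]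
    (N : ℕ) (a : Fin N → H) (w : Fin N → ℝ)
    (hw : ∀ n, 0 < w n) (hsum : ∑ n, w n = 1)
    (Ξ : H)
    (hΞ : ∀ x : H, ∑ n, w n * dist Ξ (a n) ^ 2 ≤ ∑ n, w n * dist x (a n) ^ 2)
    (Y : ℕ → Ω → H) (hY_meas : ∀ k, Measurable (Y k))
    (hY_indep : iIndepFun Y μ)
    (hY_law : ∀ k : ℕ, 1 ≤ k →
      Measure.map (Y k) μ = ∑ n, ENNReal.ofReal (w n) • Measure.dirac (a n))
    (S : ℕ → Ω → H)
    (hS1 : ∀ ω, S 1 ω = Y 1 ω)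
    (hSrec : ∀ k : ℕ, 1 ≤ k → ∀ ω : Ω,
      S (k + 1) ω = G.geo (S k ω) (Y (k + 1) ω) (1 / ((k : ℝ) + 1))) :
    ∀ k : ℕ, 1 ≤ k →
      ∫ ω, dist Ξ (S k ω) ^ 2 ∂μ ≤ (∑ n, w n * dist Ξ (a n) ^ 2) / (k : ℝ) := by
  classical
  set ξ : ℝ := ∑ n, w n * dist Ξ (a n) ^ 2 with hξdef
  have hξ0 : 0 ≤ ξ :=
    Finset.sum_nonneg fun n _ => mul_nonneg (hw n).le (sq_nonneg _)
  -- variance inequality for the barycenter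
  have hvar : ∀ x : H, ξ + dist Ξ x ^ 2 ≤ ∑ n, w n * dist x (a n) ^ 2 := by
    intro x
    set F : ℝ := ∑ n, w n * dist x (a n) ^ 2 with hFdef
    have key : ∀ t : ℝ, 0 < t → t ≤ 1 → ξ + (1 - t) * dist Ξ x ^ 2 ≤ F := by
      intro t ht0 ht1
      have hmem : t ∈ Set.Icc (0 : ℝ) 1 := ⟨ht0.le, ht1⟩
      have h1 : ξ ≤ ∑ n, w n * dist (G.geo Ξ x t) (a n) ^ 2 := hΞ _
      have h2 : ∑ n, w n * dist (G.geo Ξ x t) (a n) ^ 2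
          ≤ ∑ n, ((1-t) * (w n * dist Ξ (a n) ^ 2) + t * (w n * dist x (a n) ^ 2)
            - (t * (1-t) * dist Ξ x ^ 2) * w n) := by
        refine Finset.sum_le_sum fun n _ => ?_
        have h := G.cat0 (a n) Ξ x t hmem
        rw [dist_comm (a n) Ξ, dist_comm (a n) x, dist_comm (a n) (G.geo Ξ x t)] at h
        calc w n * dist (G.geo Ξ x t) (a n) ^ 2
            ≤ w n * ((1 - t) * dist Ξ (a n) ^ 2 + t * dist x (a n) ^ 2
              - t * (1 - t) * dist Ξ x ^ 2) := mul_le_mul_of_nonneg_left h (hw n).le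
          _ = (1-t) * (w n * dist Ξ (a n) ^ 2) + t * (w n * dist x (a n) ^ 2)
              - (t * (1-t) * dist Ξ x ^ 2) * w n := by ring
      rw [Finset.sum_sub_distrib, Finset.sum_add_distrib, ← Finset.mul_sum, ← Finset.mul_sum,
        ← Finset.mul_sum, hsum, mul_one] at h2
      rw [← hξdef, ← hFdef] at h2
      have h3 : t * (ξ + (1 - t) * dist Ξ x ^ 2) ≤ t * F := by nlinarith [h1, h2]
      exact le_of_mul_le_mul_left h3 ht0
    have hlim : Tendsto (fun n : ℕ => ξ + (1 - 1/((n:ℝ)+1)) * dist Ξ x ^ 2) atTop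
        (𝓝 (ξ + (1 - 0) * dist Ξ x ^ 2)) := by
      exact tendsto_const_nhds.add
        (((tendsto_const_nhds.sub tendsto_one_div_add_atTop_nhds_zero_nat).mul_const _))
    have := le_of_tendsto hlim (Filter.Eventually.of_forall fun n =>
      key (1/((n:ℝ)+1)) (by positivity) (by
        rw [div_le_one (by positivity)]
        have : (0:ℝ) ≤ (n:ℝ) := Nat.cast_nonneg n
        linarith))
    simpa using this
  -- the "retraction" onto the (finite) support
  set c : H → H := fun x => if x ∈ Set.range a then x else Ξ with hcdef
  have hc_of_mem : ∀ x : H, x ∈ Set.range a → c x = x := fun x hx => if_pos hx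
  have hc_of_not_mem : ∀ x : H, x ∉ Set.range a → c x = Ξ := fun x hx => if_neg hx
  have hrange_meas : MeasurableSet (Set.range a) := (Set.finite_range a).measurableSet
  have hc_meas : Measurable c := by
    intro s hs
    by_cases hΞs : Ξ ∈ s
    · have h : c ⁻¹' s = (Set.range a ∩ s) ∪ (Set.range a)ᶜ := by
        ext x
        by_cases hx : x ∈ Set.range a
        · simp only [Set.mem_preimage, hc_of_mem x hx]
          simp [hx]
        · simp only [Set.mem_preimage, hc_of_not_mem x hx]
          simp [hx, hΞs]
      rw [h]
      exact (((Set.finite_range a).inter_of_left s).measurableSet).union hrange_meas.compl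
    · have h : c ⁻¹' s = Set.range a ∩ s := by
        ext x
        by_cases hx : x ∈ Set.range a
        · simp only [Set.mem_preimage, hc_of_mem x hx]
          simp [hx]
        · simp only [Set.mem_preimage, hc_of_not_mem x hx]
          simp [hx, hΞs]
      rw [h]
      exact ((Set.finite_range a).inter_of_left s).measurableSet
  have hc_range : (Set.range c).Countable := by
    refine Set.Countable.mono ?_ ((Set.finite_range a).insert Ξ).countable
    rintro _ ⟨x, rfl⟩
    by_cases hx : x ∈ Set.range a
    · rw [hc_of_mem x hx]
      exact Set.mem_insert_of_mem _ hx
    · rw [hc_of_not_mem x hx]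
      exact Set.mem_insert _ _
  have hc_fix : ∀ n, c (a n) = a n := fun n => hc_of_mem _ ⟨n, rfl⟩
  -- law of the modified variables
  have hmapY' : ∀ k : ℕ, 1 ≤ k →
      μ.map (fun ω => c (Y k ω)) = ∑ n, ENNReal.ofReal (w n) • Measure.dirac (a n) := by
    intro k hk
    have h0 : μ.map (fun ω => c (Y k ω)) = (μ.map (Y k)).map c := by
      rw [Measure.map_map hc_meas (hY_meas k)]
      rfl
    rw [h0, hY_law k hk]
    ext s hs
    rw [Measure.map_apply hc_meas hs]
    simp only [Measure.coe_finset_sum, Finset.sum_apply, Measure.smul_apply, smul_eq_mul]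
    refine Finset.sum_congr rfl fun n _ => ?_
    rw [Measure.dirac_apply' _ (hc_meas hs), Measure.dirac_apply' _ hs]
    congr 1
    by_cases h : a n ∈ s
    · rw [Set.indicator_of_mem (by simp [Set.mem_preimage, hc_fix n, h]),
        Set.indicator_of_mem h]
    · rw [Set.indicator_of_notMem (by simp [Set.mem_preimage, hc_fix n, h]),
        Set.indicator_of_notMem h]
  -- integrating against the law
  have hsum_dirac : ∀ (f : H → ℝ≥0∞), Measurable f →
      ∫⁻ y, f y ∂(∑ n, ENNReal.ofReal (w n) • Measure.dirac (a n))
        = ∑ n, ENNReal.ofReal (w n) * f (a n) := by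
    intro f hf
    rw [lintegral_finset_sum_measure]
    exact Finset.sum_congr rfl fun n _ => by
      rw [lintegral_smul_measure, lintegral_dirac' _ hf, smul_eq_mul]
  have hofReal_sum : ∀ x : H,
      ∑ n, ENNReal.ofReal (w n) * ENNReal.ofReal (dist x (a n) ^ 2)
        = ENNReal.ofReal (∑ n, w n * dist x (a n) ^ 2) := by
    intro x
    rw [ENNReal.ofReal_sum_of_nonneg fun n _ => mul_nonneg (hw n).le (sq_nonneg _)]
    exact Finset.sum_congr rfl fun n _ => (ENNReal.ofReal_mul (hw n).le).symm
  -- expectation of dist x (Y' k)^2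
  have hEB : ∀ x : H, ∀ k : ℕ, 1 ≤ k →
      ∫⁻ ω, ENNReal.ofReal (dist x (c (Y k ω)) ^ 2) ∂μ
        = ENNReal.ofReal (∑ n, w n * dist x (a n) ^ 2) := by
    intro x k hk
    have hf : Measurable fun y : H => ENNReal.ofReal (dist x y ^ 2) :=
      (((continuous_const.dist continuous_id).pow 2).measurable).ennreal_ofReal
    have h2 : ∫⁻ ω, ENNReal.ofReal (dist x (c (Y k ω)) ^ 2) ∂μ
        = ∫⁻ y, ENNReal.ofReal (dist x y ^ 2) ∂(μ.map fun ω => c (Y k ω)) :=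
      (lintegral_map hf (hc_meas.comp (hY_meas k))).symm
    rw [h2, hmapY' k hk, hsum_dirac _ hf, hofReal_sum x]
  -- the measurable modification S'
  set S' : ℕ → Ω → H := fun k ω => hadamardBuild G.geo (fun i => c (Y i ω)) k with hS'def
  have hS'rec : ∀ k : ℕ, 1 ≤ k → ∀ ω,
      S' (k+1) ω = G.geo (S' k ω) (c (Y (k+1) ω)) (1/((k:ℝ)+1)) := by
    intro k hk ω
    obtain ⟨j, rfl⟩ : ∃ j, k = j + 1 := ⟨k - 1, by omega⟩
    show hadamardBuild G.geo (fun i => c (Y i ω)) (j+2) = _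
    rw [hadamardBuild]
    have hco : ((j:ℝ)+2) = ((j+1:ℕ):ℝ)+1 := by push_cast; ring
    rw [hco]
  have hY'_meas : ∀ k, Measurable fun ω => c (Y k ω) := fun k => hc_meas.comp (hY_meas k)
  have hY'_range : ∀ k, (Set.range fun ω => c (Y k ω)).Countable := fun k =>
    hc_range.mono (by rintro _ ⟨ω, rfl⟩; exact ⟨Y k ω, rfl⟩)
  -- measurability w.r.t. the sigma-algebra generated by Y 0, ..., Y k, and countable range
  set mY : ℕ → MeasurableSpace Ω :=
    fun i => MeasurableSpace.comap (Y i) inferInstance with hmYdef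
  set Msup : ℕ → MeasurableSpace Ω := fun k => ⨆ i ∈ {i : ℕ | i ≤ k}, mY i with hMsupdef
  have hmY_le : ∀ i k, i ≤ k → mY i ≤ Msup k := by
    intro i k hik
    exact le_iSup₂ (f := fun i (_ : i ∈ {i : ℕ | i ≤ k}) => mY i) i hik
  have hMsup_mono : ∀ j k, j ≤ k → Msup j ≤ Msup k := by
    intro j k hjk
    exact iSup₂_le fun i hi => hmY_le i k (le_trans hi hjk)
  have hMsup_le : ∀ k, Msup k ≤ m0 := fun k =>
    iSup₂_le fun i _ => (hY_meas i).comap_le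
  have hY'_measM : ∀ i, Measurable[mY i] fun ω => c (Y i ω) := fun i =>
    hc_meas.comp (Measurable.of_comap_le le_rfl)
  have hS'_main : ∀ k, Measurable[Msup k] (S' k) ∧ (Set.range (S' k)).Countable := by
    intro k
    induction k using Nat.strong_induction_on with
    | _ k ih =>
      match k with
      | 0 =>
        refine ⟨(hY'_measM 0).mono (hmY_le 0 0 le_rfl) le_rfl, hY'_range 0⟩
      | 1 =>
        refine ⟨(hY'_measM 1).mono (hmY_le 1 1 le_rfl) le_rfl, hY'_range 1⟩
      | (j+2) =>
        obtain ⟨hm, hr⟩ := ih (j+1) (by omega)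
        have hs : S' (j+2) = fun ω =>
            G.geo (S' (j+1) ω) (c (Y (j+2) ω)) (1/((j:ℝ)+2)) := rfl
        constructor
        · rw [hs]
          exact meas_comp_cr₂ (hm.mono (hMsup_mono (j+1) (j+2) (by omega)) le_rfl)
            ((hY'_measM (j+2)).mono (hmY_le (j+2) (j+2) le_rfl) le_rfl)
            hr (hY'_range (j+2)) (fun x y => G.geo x y (1/((j:ℝ)+2)))
        · rw [hs]
          refine (hr.image2 (hY'_range (j+2))
            (fun x y => G.geo x y (1/((j:ℝ)+2)))).mono ?_
          rintro _ ⟨ω, rfl⟩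
          exact Set.mem_image2_of_mem ⟨ω, rfl⟩ ⟨ω, rfl⟩
  have hS'_meas : ∀ k, Measurable (S' k) := fun k =>
    ((hS'_main k).1).mono (hMsup_le k) le_rfl
  have hS'_range : ∀ k, (Set.range (S' k)).Countable := fun k => (hS'_main k).2
  -- independence of the sigma algebras
  have hIndepM : ∀ k : ℕ, Indep (Msup k) (mY (k+1)) μ := by
    intro k
    have hiI : iIndep mY μ :=
      (iIndepFun_iff_iIndep (fun _ : ℕ => (inferInstance : MeasurableSpace H)) Y μ).mp hY_indep
    have hindep := indep_biSup_compl (fun i => (hY_meas i).comap_le) hiI {i : ℕ | i ≤ k}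
    refine indep_of_indep_of_le_right hindep ?_
    exact le_iSup₂ (f := fun i (_ : i ∈ {i : ℕ | i ≤ k}ᶜ) => mY i) (k+1) (by simp)
  -- decomposition of integrals of functions of (S' k, Y' (k+1)) over the countable range
  have hdec : ∀ k : ℕ, ∀ Φ : H → H → ℝ≥0∞,
      ∫⁻ ω, Φ (S' k ω) (c (Y (k+1) ω)) ∂μ
        = ∑' x : (Set.range (S' k)),
            μ (S' k ⁻¹' {(x : H)}) * ∫⁻ ω, Φ (x : H) (c (Y (k+1) ω)) ∂μ := by
    intro k Φ
    haveI : Countable (Set.range (S' k)) := (hS'_range k).to_subtype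
    have h1 : ∀ ω, Φ (S' k ω) (c (Y (k+1) ω))
        = ∑' x : (Set.range (S' k)),
            (if S' k ω = (x : H) then (1:ℝ≥0∞) else 0) * Φ (x : H) (c (Y (k+1) ω)) := by
      intro ω
      rw [tsum_eq_single (⟨S' k ω, ⟨ω, rfl⟩⟩ : Set.range (S' k)) ?_]
      · simp
      · rintro ⟨x, hx⟩ hne
        rw [if_neg, zero_mul]
        intro h
        exact hne (Subtype.ext h.symm)
    have hmeas_u : ∀ x : H, Measurable[Msup k]
        fun ω => (if S' k ω = x then (1:ℝ≥0∞) else 0) :=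
      fun x => meas_comp_cr (hS'_main k).1 (hS'_range k)
        (fun z => if z = x then (1:ℝ≥0∞) else 0)
    have hmeas_v : ∀ x : H, Measurable[mY (k+1)]
        fun ω => Φ x (c (Y (k+1) ω)) :=
      fun x => meas_comp_cr (hY'_measM (k+1)) (hY'_range (k+1)) (Φ x)
    have hsummand : ∀ x : H, Measurable
        fun ω => (if S' k ω = x then (1:ℝ≥0∞) else 0) * Φ x (c (Y (k+1) ω)) :=
      fun x => ((hmeas_u x).mono (hMsup_le k) le_rfl).mul
        ((hmeas_v x).mono ((hY_meas (k+1)).comap_le) le_rfl)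
    calc ∫⁻ ω, Φ (S' k ω) (c (Y (k+1) ω)) ∂μ
        = ∫⁻ ω, ∑' x : (Set.range (S' k)),
            (if S' k ω = (x:H) then (1:ℝ≥0∞) else 0) * Φ (x:H) (c (Y (k+1) ω)) ∂μ :=
          lintegral_congr h1
      _ = ∑' x : (Set.range (S' k)), ∫⁻ ω,
            (if S' k ω = (x:H) then (1:ℝ≥0∞) else 0) * Φ (x:H) (c (Y (k+1) ω)) ∂μ :=
          lintegral_tsum fun x => (hsummand (x:H)).aemeasurable
      _ = _ := by
          refine tsum_congr fun x => ?_
          rw [lintegral_mul_eq_lintegral_mul_lintegral_of_independent_measurableSpace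
            (hMsup_le k) ((hY_meas (k+1)).comap_le) (hIndepM k) (hmeas_u (x:H)) (hmeas_v (x:H))]
          congr 1
          have h3 : (fun ω => if S' k ω = (x:H) then (1:ℝ≥0∞) else 0)
              = (S' k ⁻¹' {(x:H)}).indicator 1 := by
            ext ω
            simp [Set.indicator_apply]
          rw [h3, lintegral_indicator_one (hS'_meas k (measurableSet_singleton _))]
  -- total mass of the range decomposition
  have hdec_one : ∀ k : ℕ,
      ∑' x : (Set.range (S' k)), μ (S' k ⁻¹' {(x : H)}) = 1 := by
    intro k
    have := hdec k (fun _ _ => (1:ℝ≥0∞))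
    simp only [lintegral_const, measure_univ, mul_one] at this
    exact this.symm
  -- the main L² quantities
  set L : ℕ → ℝ≥0∞ := fun k => ∫⁻ ω, ENNReal.ofReal (dist Ξ (S' k ω) ^ 2) ∂μ with hLdef
  -- L² distance decomposition
  have hdec_L : ∀ k : ℕ,
      L k = ∑' x : (Set.range (S' k)),
            μ (S' k ⁻¹' {(x : H)}) * ENNReal.ofReal (dist Ξ (x:H) ^ 2) := by
    intro k
    have := hdec k (fun x _ => ENNReal.ofReal (dist Ξ x ^ 2))
    simp only [lintegral_const, measure_univ, mul_one] at this
    exact this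
  have hgΞ : Measurable fun z : H => ENNReal.ofReal (dist Ξ z ^ 2) :=
    (((continuous_const.dist continuous_id).pow 2).measurable).ennreal_ofReal
  have hL_measfun : ∀ k, Measurable fun ω => ENNReal.ofReal (dist Ξ (S' k ω) ^ 2) :=
    fun k => hgΞ.comp (hS'_meas k)
  -- lower bound on the cross term via independence
  have hEC : ∀ k : ℕ, 1 ≤ k →
      ENNReal.ofReal ξ + L k
        ≤ ∫⁻ ω, ENNReal.ofReal (dist (S' k ω) (c (Y (k+1) ω)) ^ 2) ∂μ := by
    intro k hk
    rw [hdec k (fun x y => ENNReal.ofReal (dist x y ^ 2))]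
    have hterm : ∀ x : H,
        ∫⁻ ω, ENNReal.ofReal (dist x (c (Y (k+1) ω)) ^ 2) ∂μ
          = ENNReal.ofReal (∑ n, w n * dist x (a n) ^ 2) := fun x => hEB x (k+1) (by omega)
    calc ENNReal.ofReal ξ + L k
        = (∑' x : (Set.range (S' k)), μ (S' k ⁻¹' {(x : H)})) * ENNReal.ofReal ξ
          + ∑' x : (Set.range (S' k)),
              μ (S' k ⁻¹' {(x : H)}) * ENNReal.ofReal (dist Ξ (x:H) ^ 2) := by
          rw [hdec_one k, one_mul, hdec_L k]
      _ = ∑' x : (Set.range (S' k)), μ (S' k ⁻¹' {(x : H)})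
            * (ENNReal.ofReal ξ + ENNReal.ofReal (dist Ξ (x:H) ^ 2)) := by
          rw [← ENNReal.tsum_mul_right, ← ENNReal.tsum_add]
          exact tsum_congr fun x => by ring
      _ ≤ ∑' x : (Set.range (S' k)), μ (S' k ⁻¹' {(x : H)})
            * ENNReal.ofReal (∑ n, w n * dist (x:H) (a n) ^ 2) := by
          refine ENNReal.tsum_le_tsum fun x => mul_le_mul_right ?_ _
          rw [← ENNReal.ofReal_add hξ0 (sq_nonneg _)]
          exact ENNReal.ofReal_le_ofReal (hvar (x:H))
      _ = _ := tsum_congr fun x => by rw [hterm (x:H)]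
  -- the main induction
  have main : ∀ k : ℕ, 1 ≤ k → L k ≤ ENNReal.ofReal (ξ / k) := by
    intro k hk
    induction k, hk using Nat.le_induction with
    | base =>
      have h1 : (fun ω => ENNReal.ofReal (dist Ξ (S' 1 ω) ^ 2))
          = fun ω => ENNReal.ofReal (dist Ξ (c (Y 1 ω)) ^ 2) := rfl
      rw [hLdef]
      simp only [h1]
      rw [hEB Ξ 1 le_rfl]
      norm_num
      exact le_rfl
    | succ k hk ih =>
      set t : ℝ := 1/((k:ℝ)+1) with htdef
      have hkpos : (0:ℝ) < (k:ℝ) := by exact_mod_cast hk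
      have ht0 : 0 < t := by positivity
      have ht1 : t ≤ 1 := by
        rw [htdef, div_le_one (by positivity)]
        linarith
      have hA : (0:ℝ) ≤ 1 - t := by linarith
      have hB : (0:ℝ) ≤ t * (1 - t) := mul_nonneg ht0.le hA
      have hpt : ∀ ω, ENNReal.ofReal (dist Ξ (S' (k+1) ω) ^ 2)
          + ENNReal.ofReal (t*(1-t)) * ENNReal.ofReal (dist (S' k ω) (c (Y (k+1) ω)) ^ 2)
          ≤ ENNReal.ofReal (1-t) * ENNReal.ofReal (dist Ξ (S' k ω) ^ 2)
            + ENNReal.ofReal t * ENNReal.ofReal (dist Ξ (c (Y (k+1) ω)) ^ 2) := by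
        intro ω
        have h := G.cat0 Ξ (S' k ω) (c (Y (k+1) ω)) t ⟨ht0.le, ht1⟩
        rw [hS'rec k hk ω]
        calc ENNReal.ofReal (dist Ξ (G.geo (S' k ω) (c (Y (k+1) ω)) t) ^ 2)
            + ENNReal.ofReal (t*(1-t)) * ENNReal.ofReal (dist (S' k ω) (c (Y (k+1) ω)) ^ 2)
            = ENNReal.ofReal (dist Ξ (G.geo (S' k ω) (c (Y (k+1) ω)) t) ^ 2
                + t*(1-t) * dist (S' k ω) (c (Y (k+1) ω)) ^ 2) := by
              rw [ENNReal.ofReal_add (sq_nonneg _) (mul_nonneg hB (sq_nonneg _)),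
                ENNReal.ofReal_mul hB]
          _ ≤ ENNReal.ofReal ((1-t) * dist Ξ (S' k ω) ^ 2
                + t * dist Ξ (c (Y (k+1) ω)) ^ 2) :=
              ENNReal.ofReal_le_ofReal (by linarith [h])
          _ = ENNReal.ofReal (1-t) * ENNReal.ofReal (dist Ξ (S' k ω) ^ 2)
              + ENNReal.ofReal t * ENNReal.ofReal (dist Ξ (c (Y (k+1) ω)) ^ 2) := by
              rw [ENNReal.ofReal_add (mul_nonneg hA (sq_nonneg _))
                (mul_nonneg ht0.le (sq_nonneg _)), ENNReal.ofReal_mul hA,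
                ENNReal.ofReal_mul ht0.le]
      have hCmeas : Measurable fun ω =>
          ENNReal.ofReal (dist (S' k ω) (c (Y (k+1) ω)) ^ 2) :=
        meas_comp_cr₂ (hS'_meas k) (hY'_meas (k+1)) (hS'_range k) (hY'_range (k+1))
          (fun x y => ENNReal.ofReal (dist x y ^ 2))
      have hsplit : L (k+1)
          + ENNReal.ofReal (t*(1-t))
            * ∫⁻ ω, ENNReal.ofReal (dist (S' k ω) (c (Y (k+1) ω)) ^ 2) ∂μ
          ≤ ENNReal.ofReal (1-t) * L k + ENNReal.ofReal t * ENNReal.ofReal ξ := by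
        have hYg : Measurable fun ω => ENNReal.ofReal (dist Ξ (c (Y (k+1) ω)) ^ 2) :=
          hgΞ.comp (hY'_meas (k+1))
        have h := lintegral_mono (μ := μ) hpt
        rw [lintegral_add_left (hL_measfun (k+1)), lintegral_const_mul _ hCmeas,
          lintegral_add_left ((hL_measfun k).const_mul _), lintegral_const_mul _ (hL_measfun k),
          lintegral_const_mul _ hYg, hEB Ξ (k+1) (by omega)] at h
        exact h
      have hLk_fin : L k ≠ ⊤ := (lt_of_le_of_lt ih ENNReal.ofReal_lt_top).ne
      have h1 : L (k+1) + ENNReal.ofReal (t*(1-t)) * (ENNReal.ofReal ξ + L k)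
          ≤ ENNReal.ofReal (1-t) * L k + ENNReal.ofReal t * ENNReal.ofReal ξ :=
        le_trans (add_le_add_right (mul_le_mul_right (hEC k hk) _) _) hsplit
      have hsplit2 : ENNReal.ofReal (1-t) * L k + ENNReal.ofReal t * ENNReal.ofReal ξ
          = (ENNReal.ofReal ((1-t)^2) * L k + ENNReal.ofReal (t^2) * ENNReal.ofReal ξ)
            + ENNReal.ofReal (t*(1-t)) * (ENNReal.ofReal ξ + L k) := by
        have e1 : ENNReal.ofReal (1-t)
            = ENNReal.ofReal ((1-t)^2) + ENNReal.ofReal (t*(1-t)) := by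
          rw [← ENNReal.ofReal_add (by nlinarith) hB]
          congr 1
          ring
        have e2 : ENNReal.ofReal t = ENNReal.ofReal (t^2) + ENNReal.ofReal (t*(1-t)) := by
          rw [← ENNReal.ofReal_add (by positivity) hB]
          congr 1
          ring
        rw [e1, e2]
        ring
      have hfin : ENNReal.ofReal (t*(1-t)) * (ENNReal.ofReal ξ + L k) ≠ ⊤ :=
        ENNReal.mul_ne_top ENNReal.ofReal_ne_top
          (ENNReal.add_ne_top.mpr ⟨ENNReal.ofReal_ne_top, hLk_fin⟩)
      have h2 : L (k+1)
          ≤ ENNReal.ofReal ((1-t)^2) * L k + ENNReal.ofReal (t^2) * ENNReal.ofReal ξ := by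
        rw [hsplit2] at h1
        exact (ENNReal.add_le_add_iff_right hfin).mp h1
      have h3 : L (k+1) ≤ ENNReal.ofReal ((1-t)^2) * ENNReal.ofReal (ξ/k)
          + ENNReal.ofReal (t^2) * ENNReal.ofReal ξ :=
        le_trans h2 (add_le_add_left (mul_le_mul_right ih _) _)
      have hreal : (1-t)^2 * (ξ/k) + t^2 * ξ = ξ / (((k+1:ℕ)) : ℝ) := by
        rw [htdef]
        have hk0 : (k:ℝ) ≠ 0 := ne_of_gt hkpos
        have hk1 : (k:ℝ) + 1 ≠ 0 := by positivity
        push_cast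
        field_simp
        ring
      calc L (k+1) ≤ _ := h3
        _ = ENNReal.ofReal ((1-t)^2 * (ξ/k) + t^2 * ξ) := by
            rw [ENNReal.ofReal_add (by positivity) (by positivity),
              ENNReal.ofReal_mul (by positivity), ENNReal.ofReal_mul (by positivity)]
        _ = ENNReal.ofReal (ξ / (((k+1:ℕ)) : ℝ)) := by rw [hreal]
  -- almost sure identification of S with S'
  have hΩ0 : ∀ᵐ ω ∂μ, ∀ i : ℕ, Y (i+1) ω ∈ Set.range a := by
    rw [ae_all_iff]
    intro i
    have h1 : μ (Y (i+1) ⁻¹' (Set.range a)) = 1 := by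
      rw [← Measure.map_apply (hY_meas (i+1)) hrange_meas, hY_law (i+1) (by omega)]
      simp only [Measure.coe_finset_sum, Finset.sum_apply, Measure.smul_apply, smul_eq_mul]
      have hd : ∀ n : Fin N, Measure.dirac (a n) (Set.range a) = 1 := fun n => by
        rw [Measure.dirac_apply' _ hrange_meas, Set.indicator_of_mem (Set.mem_range_self n)]
        rfl
      simp only [hd, mul_one]
      rw [← ENNReal.ofReal_sum_of_nonneg fun n _ => (hw n).le, hsum, ENNReal.ofReal_one]
    have h2 := (prob_compl_eq_zero_iff ((hY_meas (i+1)) hrange_meas)).mpr h1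
    rw [ae_iff]
    have h3 : {ω | ¬ Y (i+1) ω ∈ Set.range a} = (Y (i+1) ⁻¹' (Set.range a))ᶜ := rfl
    rw [h3]
    exact h2
  have hSS' : ∀ᵐ ω ∂μ, ∀ k : ℕ, 1 ≤ k → S k ω = S' k ω := by
    refine hΩ0.mono fun ω hω => ?_
    intro k hk
    induction k, hk using Nat.le_induction with
    | base =>
      rw [hS1]
      show Y 1 ω = c (Y 1 ω)
      rw [hc_of_mem _ (hω 0)]
    | succ k hk ih =>
      rw [hSrec k hk ω, ih, hS'rec k hk ω]
      congr 1
      rw [hc_of_mem _ (hω k)]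
  -- conclusion
  intro k hk
  have hmeasf : Measurable fun ω => dist Ξ (S' k ω) ^ 2 :=
    (((continuous_const.dist continuous_id).pow 2).measurable).comp (hS'_meas k)
  calc ∫ ω, dist Ξ (S k ω) ^ 2 ∂μ
      = ∫ ω, dist Ξ (S' k ω) ^ 2 ∂μ :=
        integral_congr_ae (hSS'.mono fun ω h => by
          show dist Ξ (S k ω) ^ 2 = dist Ξ (S' k ω) ^ 2
          rw [h k hk])
    _ = (∫⁻ ω, ENNReal.ofReal (dist Ξ (S' k ω) ^ 2) ∂μ).toReal :=
        integral_eq_lintegral_of_nonneg_ae (Filter.Eventually.of_forall fun ω => by positivity)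
          hmeasf.aestronglyMeasurable
    _ ≤ (ENNReal.ofReal (ξ / k)).toReal :=
        ENNReal.toReal_mono ENNReal.ofReal_ne_top (main k hk)
    _ = ξ / k := ENNReal.toReal_ofReal (by positivity)
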